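/- (Classical correlated sampling, coupling form.) There exists a universal constant K > 0 such that for every finite nonempty set 𝒰 there exist a probability space (S, ν) and, for every probability distribution P on 𝒰, a random variable f_P : S → 𝒰 whose distribution under ν is exactly P, with the following property: for all probability distributions P and Q on 𝒰, ν({ω ∈ S : f_P(ω) ≠ f_Q(ω)}) ≤ K · ‖P − Q‖, where ‖P − Q‖ = (1/2) Σ_{u∈𝒰} |P(u) − Q(u)| is the total variation distance. -/

import Mathlib

open MeasureTheory Set
open scoped ENNReal

noncomputable section CS
namespace CS
set_option linter.unusedSectionVars false

variable {𝒰 : Type} [Fintype 𝒰] [Nonempty 𝒰]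

abbrev n (𝒰 : Type) [Fintype 𝒰] : ℕ := Fintype.card 𝒰
lemma n_pos (𝒰 : Type) [Fintype 𝒰] [Nonempty 𝒰] : 0 < n 𝒰 := Fintype.card_pos
def e (𝒰 : Type) [Fintype 𝒰] : 𝒰 ≃ Fin (n 𝒰) := Fintype.equivFin 𝒰
abbrev N (𝒰 : Type) [Fintype 𝒰] : ℕ := (n 𝒰) ^ 2

def kk (c : ℕ → ℝ) (s : ℝ) : ℕ := sInf {m | s ≤ c (m + 1)}

lemma kk_eq (c : ℕ → ℝ) (hc : Monotone c) {m₀ : ℕ} {s : ℝ}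
    (h1 : c m₀ < s) (h2 : s ≤ c (m₀ + 1)) : kk c s = m₀ := by
  unfold kk
  have hmem : m₀ ∈ {m | s ≤ c (m + 1)} := h2
  apply le_antisymm (Nat.sInf_le hmem)
  by_contra hlt
  push_neg at hlt
  have h3 : sInf {m | s ≤ c (m + 1)} ∈ {m | s ≤ c (m + 1)} := Nat.sInf_mem ⟨m₀, hmem⟩
  have h4 : c (sInf {m | s ≤ c (m + 1)} + 1) ≤ c m₀ := hc (by omega)
  exact absurd (h3.trans h4) (not_le.2 h1)

lemma kk_spec (c : ℕ → ℝ) (hc0 : c 0 = 0)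
    (hcn : 1 ≤ c (n 𝒰)) {s : ℝ} (hs : s ∈ Ioc (0:ℝ) 1) :
    kk c s < n 𝒰 ∧ s ∈ Ioc (c (kk c s)) (c (kk c s + 1)) := by
  unfold kk
  have hne : (n 𝒰 - 1) ∈ {m | s ≤ c (m + 1)} := by
    have h1 : n 𝒰 - 1 + 1 = n 𝒰 := by have := n_pos 𝒰; omega
    simp only [Set.mem_setOf_eq, h1]
    exact hs.2.trans hcn
  have hk_le : sInf {m | s ≤ c (m + 1)} ≤ n 𝒰 - 1 := Nat.sInf_le hne
  have hklt : sInf {m | s ≤ c (m + 1)} < n 𝒰 := by have := n_pos 𝒰; omega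
  refine ⟨hklt, ?_, Nat.sInf_mem ⟨_, hne⟩⟩
  rcases Nat.eq_zero_or_pos (sInf {m | s ≤ c (m + 1)}) with h0 | hpos
  · rw [h0, hc0]; exact hs.1
  · by_contra hle
    push_neg at hle
    have hmem2 : sInf {m | s ≤ c (m + 1)} - 1 ∈ {m | s ≤ c (m + 1)} := by
      simp only [Set.mem_setOf_eq]
      have h1 : sInf {m | s ≤ c (m + 1)} - 1 + 1 = sInf {m | s ≤ c (m + 1)} := by omega
      rw [h1]; exact hle
    have := Nat.sInf_le hmem2
    omega

lemma kk_fiber_succ (c : ℕ → ℝ) (hc : Monotone c) (m : ℕ) :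
    {s | kk c s = m + 1} = Ioc (c (m + 1)) (c (m + 2)) := by
  ext s
  simp only [Set.mem_setOf_eq, Set.mem_Ioc]
  constructor
  · intro h
    have hne : {j | s ≤ c (j + 1)}.Nonempty := by
      by_contra hne
      rw [Set.not_nonempty_iff_eq_empty] at hne
      simp [kk, hne] at h
    have hmem : kk c s ∈ {j | s ≤ c (j + 1)} := Nat.sInf_mem hne
    have hnot : m ∉ {j | s ≤ c (j + 1)} := fun hm => by
      have := Nat.sInf_le hm
      unfold kk at h; omega
    rw [h] at hmem
    simp only [Set.mem_setOf_eq, not_le] at hmem hnot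
    exact ⟨hnot, hmem⟩
  · intro ⟨h1, h2⟩
    exact kk_eq c hc h1 h2

lemma measurableSet_kk_fiber (c : ℕ → ℝ) (hc : Monotone c) (m : ℕ) :
    MeasurableSet {s : ℝ | kk c s = m} := by
  cases m with
  | succ m => rw [kk_fiber_succ c hc m]; exact measurableSet_Ioc
  | zero =>
    have : {s : ℝ | kk c s = 0} = (⋃ m : ℕ, {s : ℝ | kk c s = m + 1})ᶜ := by
      ext s
      simp only [Set.mem_compl_iff, Set.mem_iUnion, Set.mem_setOf_eq]
      constructor
      · intro h ⟨m, hm⟩; omega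
      · intro h
        push_neg at h
        rcases Nat.eq_zero_or_pos (kk c s) with h0 | hpos
        · exact h0
        · exact absurd (h (kk c s - 1)) (by intro hh; omega)
    rw [this]
    exact (MeasurableSet.iUnion fun m => by
      rw [kk_fiber_succ c hc m]; exact measurableSet_Ioc).compl

def dec (𝒰 : Type) [Fintype 𝒰] [Nonempty 𝒰] (c : ℕ → ℝ) (s : ℝ) : 𝒰 :=
  if h : kk c s < n 𝒰 then (e 𝒰).symm ⟨kk c s, h⟩
  else Classical.arbitrary 𝒰

lemma measurableSet_dec_fiber (c : ℕ → ℝ) (hc : Monotone c) (v : 𝒰) :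
    MeasurableSet {s : ℝ | dec 𝒰 c s = v} := by
  have : {s : ℝ | dec 𝒰 c s = v} =
      ⋃ m ∈ {m : ℕ | (if h : m < n 𝒰 then
        ((e 𝒰).symm ⟨m, h⟩ : 𝒰) else Classical.arbitrary 𝒰) = v},
        {s : ℝ | kk c s = m} := by
    ext s
    simp only [Set.mem_iUnion, Set.mem_setOf_eq]
    constructor
    · intro h; exact ⟨kk c s, h, rfl⟩
    · rintro ⟨m, hm, hs⟩; rw [dec, hs]; exact hm
  rw [this]
  exact MeasurableSet.biUnion (Set.to_countable _)
    (fun m _ => measurableSet_kk_fiber c hc m)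

lemma dec_eq_of (c : ℕ → ℝ) (hc : Monotone c) {v : 𝒰} {s : ℝ}
    (h1 : c (e 𝒰 v) < s) (h2 : s ≤ c ((e 𝒰 v : ℕ) + 1)) : dec 𝒰 c s = v := by
  rw [dec]
  have hk : kk c s = (e 𝒰 v : ℕ) := kk_eq c hc h1 h2
  rw [dif_pos (hk ▸ (e 𝒰 v).isLt)]
  have : (⟨kk c s, hk ▸ (e 𝒰 v).isLt⟩ : Fin (n 𝒰)) = e 𝒰 v := by
    ext; exact hk
  rw [this, Equiv.symm_apply_apply]

lemma dec_eq_iff (c : ℕ → ℝ) (hc : Monotone c) (hc0 : c 0 = 0) (hcn : 1 ≤ c (n 𝒰))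
    {v : 𝒰} {s : ℝ} (hs : s ∈ Ioc (0:ℝ) 1) :
    dec 𝒰 c s = v ↔ s ∈ Ioc (c (e 𝒰 v)) (c ((e 𝒰 v : ℕ) + 1)) := by
  constructor
  · intro h
    obtain ⟨hlt, hmem⟩ := kk_spec c hc0 hcn hs (𝒰 := 𝒰)
    rw [dec, dif_pos hlt] at h
    have : (e 𝒰 v : ℕ) = kk c s := by rw [← h]; simp
    rw [this]; exact hmem
  · intro ⟨h1, h2⟩
    exact dec_eq_of c hc h1 h2


-- p / F
def p (P : 𝒰 → ℝ) (m : ℕ) : ℝ :=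
  if h : m < n 𝒰 then P ((e 𝒰).symm ⟨m, h⟩) else 0
def F (P : 𝒰 → ℝ) (m : ℕ) : ℝ := ∑ j ∈ Finset.range m, p P j

lemma p_e (P : 𝒰 → ℝ) (v : 𝒰) : p P (e 𝒰 v) = P v := by
  rw [p, dif_pos (e 𝒰 v).isLt]
  simp

section pF
variable {P : 𝒰 → ℝ} (hP : ∀ u, 0 ≤ P u) (hP1 : ∑ u, P u = 1)

include hP in
lemma p_nonneg (m : ℕ) : 0 ≤ p P m := by
  unfold p; split <;> simp [hP _]

include hP hP1 in
lemma P_le_one (u : 𝒰) : P u ≤ 1 := by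
  rw [← hP1]
  exact Finset.single_le_sum (fun v _ => hP v) (Finset.mem_univ u)

include hP hP1 in
lemma p_le_one (m : ℕ) : p P m ≤ 1 := by
  unfold p; split
  · exact P_le_one hP hP1 _
  · norm_num

lemma sum_p (m : ℕ) (hm : n 𝒰 ≤ m) : ∑ j ∈ Finset.range m, p P j = ∑ u, P u := by
  rw [← Finset.sum_range_add_sum_Ico _ hm]
  have h2 : ∑ j ∈ Finset.Ico (n 𝒰) m, p P j = 0 := by
    apply Finset.sum_eq_zero
    intro j hj
    rw [Finset.mem_Ico] at hj
    unfold p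
    rw [dif_neg (by omega)]
  rw [h2, add_zero, ← Fin.sum_univ_eq_sum_range (fun j => p P j) (n 𝒰)]
  rw [← Equiv.sum_comp (e 𝒰) (fun j => p P ((j : Fin (n 𝒰)) : ℕ))]
  exact Finset.sum_congr rfl fun u _ => p_e P u

include hP in
lemma F_mono : Monotone (F P) := fun a b hab =>
  Finset.sum_le_sum_of_subset_of_nonneg (Finset.range_subset_range.2 hab)
    (fun j _ _ => p_nonneg hP j)

lemma F_zero : F P 0 = 0 := by simp [F]

include hP1 in
lemma F_of_ge {m : ℕ} (hm : n 𝒰 ≤ m) : F P m = 1 := by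
  rw [F, sum_p m hm, hP1]

include hP in
lemma F_nonneg (m : ℕ) : 0 ≤ F P m := by
  rw [← F_zero (P := P)]; exact F_mono hP (Nat.zero_le m)

include hP hP1 in
lemma F_le_one (m : ℕ) : F P m ≤ 1 := by
  rcases le_or_gt (n 𝒰) m with h | h
  · exact (F_of_ge hP1 h).le
  · rw [← F_of_ge hP1 (le_refl (n 𝒰))]
    exact F_mono hP h.le

lemma F_succ (m : ℕ) : F P (m + 1) = F P m + p P m := Finset.sum_range_succ _ _
end pF

-- uniform partition points
def cu (𝒰 : Type) [Fintype 𝒰] [Nonempty 𝒰] : ℕ → ℝ := fun m => (m : ℝ) / (n 𝒰)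

lemma cu_mono : Monotone (cu 𝒰) := fun a b hab => by
  apply div_le_div_of_nonneg_right (by exact_mod_cast hab)
  have := n_pos 𝒰
  positivity

lemma cu_zero : cu 𝒰 0 = 0 := by simp [cu]
lemma cu_n : cu 𝒰 (n 𝒰) = 1 := by
  have := n_pos 𝒰
  show ((n 𝒰 : ℕ) : ℝ) / (n 𝒰) = 1
  exact div_self (Nat.cast_ne_zero.2 this.ne')

-- the base measure
def μ01 : Measure ℝ := volume.restrict (Ioc 0 1)

instance : IsProbabilityMeasure (μ01) :=
  ⟨by rw [μ01, Measure.restrict_apply_univ, Real.volume_Ioc]; norm_num⟩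

lemma μ01_apply (X : Set ℝ) : μ01 X = volume (X ∩ Ioc 0 1) :=
  Measure.restrict_apply' measurableSet_Ioc

lemma μ01_Ioc {a b : ℝ} (ha : 0 ≤ a) (hb : b ≤ 1) :
    μ01 (Ioc a b) = ENNReal.ofReal (b - a) := by
  rw [μ01_apply, Set.Ioc_inter_Ioc, sup_eq_left.2 ha, inf_eq_left.2 hb, Real.volume_Ioc]

lemma μ01_Ioc_le (a b : ℝ) : μ01 (Ioc a b) ≤ ENNReal.ofReal (b - a) := by
  rw [← Real.volume_Ioc]
  exact Measure.restrict_le_self _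

lemma cu_nonneg (m : ℕ) : 0 ≤ cu 𝒰 m := by
  have := n_pos 𝒰
  unfold cu; positivity

lemma cu_succ_e (v : 𝒰) : cu 𝒰 ((e 𝒰 v : ℕ) + 1) = cu 𝒰 (e 𝒰 v) + 1 / n 𝒰 := by
  unfold cu; push_cast; ring

lemma block_bound {x : ℝ} (hx : x ≤ 1) (v : 𝒰) :
    cu 𝒰 (e 𝒰 v) + x / n 𝒰 ≤ cu 𝒰 ((e 𝒰 v : ℕ) + 1) := by
  rw [cu_succ_e]
  have := n_pos 𝒰
  have : x / (n 𝒰 : ℝ) ≤ 1 / n 𝒰 :=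
    div_le_div_of_nonneg_right hx (by positivity)
  linarith

lemma blocks_disjoint {v w : 𝒰} (hvw : v ≠ w) :
    Disjoint (Ioc (cu 𝒰 (e 𝒰 v)) (cu 𝒰 ((e 𝒰 v : ℕ) + 1)))
      (Ioc (cu 𝒰 (e 𝒰 w)) (cu 𝒰 ((e 𝒰 w : ℕ) + 1))) := by
  have hne : (e 𝒰 v : ℕ) ≠ (e 𝒰 w : ℕ) := by
    intro h
    exact hvw ((e 𝒰).injective (Fin.ext h))
  rcases hne.lt_or_gt with h | h
  · rw [Set.disjoint_left]
    intro t ht1 ht2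
    have h1 : t ≤ cu 𝒰 ((e 𝒰 v : ℕ) + 1) := ht1.2
    have h2 : cu 𝒰 ((e 𝒰 v : ℕ) + 1) ≤ cu 𝒰 (e 𝒰 w) := cu_mono (by omega)
    exact absurd (h1.trans h2) (not_le.2 ht2.1)
  · rw [Set.disjoint_right]
    intro t ht1 ht2
    have h1 : t ≤ cu 𝒰 ((e 𝒰 w : ℕ) + 1) := ht1.2
    have h2 : cu 𝒰 ((e 𝒰 w : ℕ) + 1) ≤ cu 𝒰 (e 𝒰 v) := cu_mono (by omega)
    exact absurd (h1.trans h2) (not_le.2 ht2.1)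

lemma cu_le_one {m : ℕ} (hm : m ≤ n 𝒰) : cu 𝒰 m ≤ 1 := by
  rw [← cu_n (𝒰 := 𝒰)]
  exact cu_mono hm

lemma μ01_iUnion_blocks (x : 𝒰 → ℝ) (h0 : ∀ v, 0 ≤ x v) (h1 : ∀ v, x v ≤ 1) :
    μ01 (⋃ v, Ioc (cu 𝒰 (e 𝒰 v)) (cu 𝒰 (e 𝒰 v) + x v / n 𝒰)) =
      ENNReal.ofReal ((∑ v, x v) / n 𝒰) := by
  have hn := n_pos 𝒰
  rw [measure_iUnion ?_ (fun v => measurableSet_Ioc)]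
  · rw [tsum_fintype]
    have heach : ∀ v, μ01 (Ioc (cu 𝒰 (e 𝒰 v)) (cu 𝒰 (e 𝒰 v) + x v / n 𝒰)) =
        ENNReal.ofReal (x v / n 𝒰) := by
      intro v
      rw [μ01_Ioc (cu_nonneg _) (((block_bound (h1 v) v)).trans
        (cu_le_one (by have := (e 𝒰 v).isLt; omega)))]
      congr 1
      ring
    simp_rw [heach]
    rw [← ENNReal.ofReal_sum_of_nonneg (fun v _ => div_nonneg (h0 v) (by positivity)),
      Finset.sum_div]
  · intro v w hvw
    have hsv : Ioc (cu 𝒰 (e 𝒰 v)) (cu 𝒰 (e 𝒰 v) + x v / n 𝒰) ⊆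
        Ioc (cu 𝒰 (e 𝒰 v)) (cu 𝒰 ((e 𝒰 v : ℕ) + 1)) :=
      Set.Ioc_subset_Ioc_right (block_bound (h1 v) v)
    have hsw : Ioc (cu 𝒰 (e 𝒰 w)) (cu 𝒰 (e 𝒰 w) + x w / n 𝒰) ⊆
        Ioc (cu 𝒰 (e 𝒰 w)) (cu 𝒰 ((e 𝒰 w : ℕ) + 1)) :=
      Set.Ioc_subset_Ioc_right (block_bound (h1 w) w)
    exact Disjoint.mono hsv hsw (blocks_disjoint hvw)

/-- acceptance interval for value `v` -/
def A (P : 𝒰 → ℝ) (v : 𝒰) : Set ℝ :=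
  Ioc (cu 𝒰 (e 𝒰 v)) (cu 𝒰 (e 𝒰 v) + P v / n 𝒰)

/-- total acceptance region -/
def Acc (P : 𝒰 → ℝ) : Set ℝ := ⋃ v, A P v

lemma measurableSet_A (P : 𝒰 → ℝ) (v : 𝒰) : MeasurableSet (A P v) := measurableSet_Ioc
lemma measurableSet_Acc (P : 𝒰 → ℝ) : MeasurableSet (Acc P) :=
  MeasurableSet.iUnion fun v => measurableSet_A P v

section withP
variable {P Q : 𝒰 → ℝ} (hP : ∀ u, 0 ≤ P u) (hP1 : ∑ u, P u = 1)
  (hQ : ∀ u, 0 ≤ Q u) (hQ1 : ∑ u, Q u = 1)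

include hP hP1 in
lemma μ01_A_apply (v : 𝒰) : μ01 (A P v) = ENNReal.ofReal (P v / n 𝒰) := by
  rw [A, μ01_Ioc (cu_nonneg _) ((block_bound (P_le_one hP hP1 v) v).trans
    (cu_le_one (by have := (e 𝒰 v).isLt; omega))), add_sub_cancel_left]

include hP hP1 in
lemma μ01_Acc_apply : μ01 (Acc P) = ENNReal.ofReal (1 / n 𝒰) := by
  rw [Acc]
  show μ01 (⋃ v, Ioc (cu 𝒰 (e 𝒰 v)) (cu 𝒰 (e 𝒰 v) + P v / n 𝒰)) = _
  rw [μ01_iUnion_blocks P hP (P_le_one hP hP1), hP1]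

include hP hP1 in
lemma mem_A_d (v : 𝒰) {t : ℝ} (ht : t ∈ A P v) : dec 𝒰 (cu 𝒰) t = v := by
  apply dec_eq_of (cu 𝒰) cu_mono ht.1
  exact ht.2.trans (block_bound (P_le_one hP hP1 v) v)

include hP hQ hP1 hQ1 in
lemma Acc_union_eq : Acc P ∪ Acc Q =
    ⋃ v, Ioc (cu 𝒰 (e 𝒰 v)) (cu 𝒰 (e 𝒰 v) + max (P v) (Q v) / n 𝒰) := by
  rw [Acc, Acc, ← Set.iUnion_union_distrib]
  apply Set.iUnion_congr
  intro v
  rw [A, A, Set.Ioc_union_Ioc_right]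
  have hd : max (P v) (Q v) / (n 𝒰 : ℝ) = max (P v / n 𝒰) (Q v / n 𝒰) := by
    rcases le_total (P v) (Q v) with h | h
    · rw [max_eq_right h, max_eq_right
        (div_le_div_of_nonneg_right h (by positivity))]
    · rw [max_eq_left h, max_eq_left
        (div_le_div_of_nonneg_right h (by positivity))]
  rw [hd, ← max_add_add_left]

include hP hQ hP1 hQ1 in
lemma μ01_Acc_union : μ01 (Acc P ∪ Acc Q) =
    ENNReal.ofReal ((∑ v, max (P v) (Q v)) / n 𝒰) := by
  rw [Acc_union_eq hP hP1 hQ hQ1]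
  exact μ01_iUnion_blocks _ (fun v => le_max_of_le_left (hP v))
    (fun v => max_le (P_le_one hP hP1 v) (P_le_one hQ hQ1 v))

include hP hQ hP1 hQ1 in
lemma oneAcc_subset : (Acc P ∪ Acc Q) \ (Acc P ∩ Acc Q) ⊆
    ⋃ v, Ioc (cu 𝒰 (e 𝒰 v) + min (P v) (Q v) / n 𝒰)
      (cu 𝒰 (e 𝒰 v) + max (P v) (Q v) / n 𝒰) := by
  intro t ⟨ht1, ht2⟩
  rw [Acc_union_eq hP hP1 hQ hQ1] at ht1
  obtain ⟨U, ⟨v, rfl⟩, htv⟩ := ht1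
  refine Set.mem_iUnion.2 ⟨v, ?_, htv.2⟩
  by_contra hle
  push_neg at hle
  apply ht2
  have hmin : t ∈ Ioc (cu 𝒰 (e 𝒰 v)) (cu 𝒰 (e 𝒰 v) + min (P v) (Q v) / n 𝒰) :=
    ⟨htv.1, hle⟩
  constructor
  · exact Set.mem_iUnion.2 ⟨v, Set.Ioc_subset_Ioc_right
      (add_le_add_right (div_le_div_of_nonneg_right (min_le_left _ _)
        (by positivity)) _) hmin⟩
  · exact Set.mem_iUnion.2 ⟨v, Set.Ioc_subset_Ioc_right
      (add_le_add_right (div_le_div_of_nonneg_right (min_le_right _ _)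
        (by positivity)) _) hmin⟩

include hP hQ hP1 hQ1 in
lemma μ01_oneAcc_le : μ01 ((Acc P ∪ Acc Q) \ (Acc P ∩ Acc Q)) ≤
    ENNReal.ofReal ((∑ v, |P v - Q v|) / n 𝒰) := by
  refine (measure_mono (oneAcc_subset hP hP1 hQ hQ1)).trans ?_
  refine (measure_iUnion_le _).trans ?_
  rw [tsum_fintype]
  have heach : ∀ v : 𝒰, μ01 (Ioc (cu 𝒰 (e 𝒰 v) + min (P v) (Q v) / n 𝒰)
      (cu 𝒰 (e 𝒰 v) + max (P v) (Q v) / n 𝒰)) ≤ ENNReal.ofReal (|P v - Q v| / n 𝒰) := by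
    intro v
    refine (μ01_Ioc_le _ _).trans_eq ?_
    congr 1
    rw [add_sub_add_left_eq_sub, div_sub_div_same, max_sub_min_eq_abs, abs_sub_comm]
  refine (Finset.sum_le_sum (fun v _ => heach v)).trans_eq ?_
  rw [← ENNReal.ofReal_sum_of_nonneg (fun v _ => by positivity), Finset.sum_div]

end withP

section gpart
variable {P Q : 𝒰 → ℝ} (hP : ∀ u, 0 ≤ P u) (hP1 : ∑ u, P u = 1)
  (hQ : ∀ u, 0 ≤ Q u) (hQ1 : ∑ u, Q u = 1)

include hP hP1 in
lemma dec_F_iff {v : 𝒰} {s : ℝ} (hs : s ∈ Ioc (0:ℝ) 1) :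
    dec 𝒰 (F P) s = v ↔ s ∈ Ioc (F P (e 𝒰 v)) (F P ((e 𝒰 v : ℕ) + 1)) :=
  dec_eq_iff (F P) (F_mono hP) F_zero (le_of_eq (F_of_ge hP1 le_rfl).symm) hs

include hP hP1 in
lemma μ01_g_fiber (v : 𝒰) :
    μ01 {s : ℝ | dec 𝒰 (F P) s = v} = ENNReal.ofReal (P v) := by
  rw [μ01_apply]
  have hsub : Ioc (F P (e 𝒰 v)) (F P ((e 𝒰 v : ℕ) + 1)) ⊆ Ioc (0:ℝ) 1 :=
    Set.Ioc_subset_Ioc (F_nonneg hP _)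
      (F_le_one hP hP1 _)
  have hset : {s : ℝ | dec 𝒰 (F P) s = v} ∩ Ioc 0 1 =
      Ioc (F P (e 𝒰 v)) (F P ((e 𝒰 v : ℕ) + 1)) := by
    ext s
    constructor
    · rintro ⟨h1, h2⟩
      exact (dec_F_iff hP hP1 h2).1 h1
    · intro h
      exact ⟨(dec_F_iff hP hP1 (hsub h)).2 h, hsub h⟩
  rw [hset, Real.volume_Ioc, F_succ, add_sub_cancel_left, p_e]

lemma sum_abs_p (P Q : 𝒰 → ℝ) :
    ∑ j ∈ Finset.range (n 𝒰), |p P j - p Q j| = ∑ v, |P v - Q v| := by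
  rw [← Fin.sum_univ_eq_sum_range (fun j => |p P j - p Q j|) (n 𝒰),
    ← Equiv.sum_comp (e 𝒰) (fun j : Fin (n 𝒰) => |p P (j : ℕ) - p Q (j : ℕ)|)]
  exact Finset.sum_congr rfl fun v _ => by rw [p_e, p_e]

lemma F_diff_le (P Q : 𝒰 → ℝ) {m : ℕ} (hm : m ≤ n 𝒰) :
    |F P m - F Q m| ≤ ∑ v, |P v - Q v| := by
  rw [F, F, ← Finset.sum_sub_distrib]
  refine (Finset.abs_sum_le_sum_abs _ _).trans ?_
  rw [← sum_abs_p P Q]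
  exact Finset.sum_le_sum_of_subset_of_nonneg
    (Finset.range_subset_range.2 hm) (fun j _ _ => abs_nonneg _)

include hP hP1 hQ hQ1 in
lemma g_disagree_subset :
    {s : ℝ | dec 𝒰 (F P) s ≠ dec 𝒰 (F Q) s} ∩ Ioc 0 1 ⊆
      ⋃ v : 𝒰, (Ioc (F P (e 𝒰 v)) (F Q (e 𝒰 v)) ∪
        Ioc (F Q ((e 𝒰 v : ℕ) + 1)) (F P ((e 𝒰 v : ℕ) + 1))) := by
  rintro s ⟨hne, hs⟩
  set v := dec 𝒰 (F P) s with hv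
  have hPmem : s ∈ Ioc (F P (e 𝒰 v)) (F P ((e 𝒰 v : ℕ) + 1)) :=
    (dec_F_iff hP hP1 hs).1 rfl
  have hQnot : s ∉ Ioc (F Q (e 𝒰 v)) (F Q ((e 𝒰 v : ℕ) + 1)) := by
    intro hmem
    exact (Ne.symm hne) ((dec_F_iff hQ hQ1 hs).2 hmem)
  refine Set.mem_iUnion.2 ⟨v, ?_⟩
  rw [Set.mem_Ioc, not_and_or, not_lt, not_le] at hQnot
  rcases hQnot with h | h
  · exact Or.inl ⟨hPmem.1, h⟩
  · exact Or.inr ⟨h, hPmem.2⟩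

include hP hP1 hQ hQ1 in
lemma μ01_g_disagree_le :
    μ01 {s : ℝ | dec 𝒰 (F P) s ≠ dec 𝒰 (F Q) s} ≤
      ENNReal.ofReal (2 * n 𝒰 * ∑ v, |P v - Q v|) := by
  set δ := ∑ v, |P v - Q v| with hδ
  have hδ0 : 0 ≤ δ := Finset.sum_nonneg fun v _ => abs_nonneg _
  rw [μ01_apply]
  refine (measure_mono (g_disagree_subset hP hP1 hQ hQ1)).trans ?_
  refine (measure_iUnion_le _).trans ?_
  rw [tsum_fintype]
  have heach : ∀ v : 𝒰, volume (Ioc (F P (e 𝒰 v)) (F Q (e 𝒰 v)) ∪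
      Ioc (F Q ((e 𝒰 v : ℕ) + 1)) (F P ((e 𝒰 v : ℕ) + 1))) ≤ ENNReal.ofReal (2 * δ) := by
    intro v
    refine (measure_union_le _ _).trans ?_
    have h1 : volume (Ioc (F P (e 𝒰 v)) (F Q (e 𝒰 v))) ≤ ENNReal.ofReal δ := by
      rw [Real.volume_Ioc]
      apply ENNReal.ofReal_le_ofReal
      have := F_diff_le P Q (m := (e 𝒰 v : ℕ)) (by have := (e 𝒰 v).isLt; omega)
      rw [hδ]; cases abs_cases (F P (e 𝒰 v) - F Q (e 𝒰 v)) <;> linarith [this]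
    have h2 : volume (Ioc (F Q ((e 𝒰 v : ℕ) + 1)) (F P ((e 𝒰 v : ℕ) + 1))) ≤
        ENNReal.ofReal δ := by
      rw [Real.volume_Ioc]
      apply ENNReal.ofReal_le_ofReal
      have := F_diff_le P Q (m := (e 𝒰 v : ℕ) + 1) (by have := (e 𝒰 v).isLt; omega)
      rw [hδ]; cases abs_cases (F P ((e 𝒰 v : ℕ) + 1) - F Q ((e 𝒰 v : ℕ) + 1)) <;>
        linarith [this]
    calc volume (Ioc (F P (e 𝒰 v)) (F Q (e 𝒰 v))) +
        volume (Ioc (F Q ((e 𝒰 v : ℕ) + 1)) (F P ((e 𝒰 v : ℕ) + 1)))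
        ≤ ENNReal.ofReal δ + ENNReal.ofReal δ := add_le_add h1 h2
      _ = ENNReal.ofReal (2 * δ) := by
          rw [← ENNReal.ofReal_add hδ0 hδ0]; ring_nf
  refine (Finset.sum_le_sum fun v _ => heach v).trans_eq ?_
  rw [Finset.sum_const, Finset.card_univ, nsmul_eq_mul]
  show (n 𝒰 : ℝ≥0∞) * _ = _
  rw [← ENNReal.ofReal_natCast (n 𝒰), ← ENNReal.ofReal_mul (by positivity)]
  congr 1
  ring

end gpart

-- product space
def piM (𝒰 : Type) [Fintype 𝒰] [Nonempty 𝒰] : Measure (Fin (N 𝒰) → ℝ) :=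
  Measure.pi fun _ => μ01

instance : IsProbabilityMeasure (piM 𝒰) := by unfold piM; infer_instance

def nu (𝒰 : Type) [Fintype 𝒰] [Nonempty 𝒰] : Measure ((Fin (N 𝒰) → ℝ) × ℝ) :=
  (piM 𝒰).prod μ01

instance : IsProbabilityMeasure (nu 𝒰) := by unfold nu; infer_instance

lemma piM_cyl (i : Fin (N 𝒰)) (a b : Set ℝ) (ha : MeasurableSet a)
    (hb : MeasurableSet b) :
    piM 𝒰 (Set.univ.pi fun j => if j < i then a else if j = i then b else univ) =
      μ01 a ^ (i : ℕ) * μ01 b := by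
  classical
  rw [piM, Measure.pi_pi]
  have hc : ∀ j : Fin (N 𝒰), μ01 (if j < i then a else if j = i then b else univ) =
      (if j < i then μ01 a else if j = i then μ01 b else 1) := by
    intro j; split_ifs <;> simp
  rw [Finset.prod_congr rfl (fun j _ => hc j), Finset.prod_ite]
  have h1 : (∏ _x ∈ Finset.univ.filter (· < i), μ01 a) = μ01 a ^ (i : ℕ) := by
    rw [Finset.prod_const,
      show Finset.univ.filter (· < i) = Finset.Iio i from by ext j; simp, Fin.card_Iio]
  have h2 : (∏ x ∈ Finset.univ.filter (¬ · < i), if x = i then μ01 b else 1) = μ01 b := by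
    rw [Finset.prod_ite_eq' (Finset.univ.filter (¬ · < i)) i (fun _ => μ01 b),
      if_pos (by simp)]
  rw [h1, h2]

lemma piM_const (a : Set ℝ) (ha : MeasurableSet a) :
    piM 𝒰 (Set.univ.pi fun _ : Fin (N 𝒰) => a) = μ01 a ^ (N 𝒰) := by
  rw [piM, Measure.pi_pi, Finset.prod_const, Finset.card_univ, Fintype.card_fin]

-- hit events
def Hit (P : 𝒰 → ℝ) (i : Fin (N 𝒰)) (v : 𝒰) : Set (Fin (N 𝒰) → ℝ) :=
  Set.univ.pi fun j => if j < i then (Acc P)ᶜ else if j = i then A P v else univ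

def NoHit (P : 𝒰 → ℝ) : Set (Fin (N 𝒰) → ℝ) :=
  Set.univ.pi fun _ => (Acc P)ᶜ

lemma mem_Hit {P : 𝒰 → ℝ} {i : Fin (N 𝒰)} {v : 𝒰} {ω : Fin (N 𝒰) → ℝ} :
    ω ∈ Hit P i v ↔ (∀ j, j < i → ω j ∉ Acc P) ∧ ω i ∈ A P v := by
  rw [Hit, Set.mem_univ_pi]
  constructor
  · intro h
    refine ⟨fun j hj => by have := h j; rwa [if_pos hj] at this, ?_⟩
    have := h i
    rwa [if_neg (lt_irrefl i), if_pos rfl] at this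
  · rintro ⟨h1, h2⟩ j
    split_ifs with hj hji
    · exact h1 j hj
    · exact hji ▸ h2
    · trivial

lemma mem_NoHit {P : 𝒰 → ℝ} {ω : Fin (N 𝒰) → ℝ} :
    ω ∈ NoHit P ↔ ∀ j, ω j ∉ Acc P := by
  simp [NoHit, Set.mem_univ_pi]

lemma measurableSet_Hit (P : 𝒰 → ℝ) (i : Fin (N 𝒰)) (v : 𝒰) :
    MeasurableSet (Hit P i v) :=
  MeasurableSet.univ_pi fun j => by
    split_ifs
    · exact (measurableSet_Acc P).compl
    · exact measurableSet_A P v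
    · exact MeasurableSet.univ

lemma measurableSet_NoHit (P : 𝒰 → ℝ) : MeasurableSet (NoHit P) :=
  MeasurableSet.univ_pi fun _ => (measurableSet_Acc P).compl

-- the sampling function
def ff (P : 𝒰 → ℝ) (z : (Fin (N 𝒰) → ℝ) × ℝ) : 𝒰 :=
  letI := Classical.decPred fun i : Fin (N 𝒰) => z.1 i ∈ Acc P
  if h : (Finset.univ.filter fun i : Fin (N 𝒰) => z.1 i ∈ Acc P).Nonempty then
    dec 𝒰 (cu 𝒰) (z.1 ((Finset.univ.filter fun i : Fin (N 𝒰) => z.1 i ∈ Acc P).min' h))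
  else dec 𝒰 (F P) z.2

section ffsec
variable {P : 𝒰 → ℝ} (hP : ∀ u, 0 ≤ P u) (hP1 : ∑ u, P u = 1)

include hP hP1 in
lemma preim_ff (v : 𝒰) : ff P ⁻¹' {v} =
    (⋃ i, (Hit P i v) ×ˢ (univ : Set ℝ)) ∪ (NoHit P) ×ˢ {s : ℝ | dec 𝒰 (F P) s = v} := by
  classical
  ext ⟨ω, s⟩
  simp only [Set.mem_preimage, Set.mem_singleton_iff, Set.mem_union, Set.mem_iUnion,
    Set.mem_prod, Set.mem_univ, and_true, Set.mem_setOf_eq]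
  unfold ff
  dsimp only
  by_cases h : (Finset.univ.filter fun i : Fin (N 𝒰) => ω i ∈ Acc P).Nonempty
  · rw [dif_pos h]
    set i₀ := (Finset.univ.filter fun i : Fin (N 𝒰) => ω i ∈ Acc P).min' h with hi₀
    have hi₀acc : ω i₀ ∈ Acc P := by
      have := Finset.min'_mem _ h
      rw [Finset.mem_filter] at this
      exact this.2
    have hlt_notacc : ∀ j, j < i₀ → ω j ∉ Acc P := by
      intro j hj hacc
      have : i₀ ≤ j := Finset.min'_le _ j (by rw [Finset.mem_filter]; exact ⟨Finset.mem_univ _, hacc⟩)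
      exact absurd this (not_le.2 hj)
    constructor
    · intro hdec
      obtain ⟨U, ⟨w, rfl⟩, hw⟩ := hi₀acc
      have : dec 𝒰 (cu 𝒰) (ω i₀) = w := mem_A_d hP hP1 w hw
      left
      have hwv : w = v := by rw [← this, hdec]
      exact ⟨i₀, mem_Hit.2 ⟨hlt_notacc, hwv ▸ hw⟩⟩
    · rintro (⟨i, hi⟩ | ⟨hnh, _⟩)
      · obtain ⟨h1, h2⟩ := mem_Hit.1 hi
        have hii : i = i₀ := by
          have hle : i₀ ≤ i := Finset.min'_le _ i
            (by rw [Finset.mem_filter]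
                exact ⟨Finset.mem_univ _, Set.mem_iUnion.2 ⟨v, h2⟩⟩)
          rcases lt_or_eq_of_le hle with hlt | heq
          · exact absurd hi₀acc (h1 i₀ hlt)
          · exact heq.symm
        rw [hii] at h2
        exact mem_A_d hP hP1 v h2
      · exact absurd hi₀acc (mem_NoHit.1 hnh i₀)
  · rw [dif_neg h]
    have hall : ∀ j, ω j ∉ Acc P := by
      intro j hacc
      exact h ⟨j, by rw [Finset.mem_filter]; exact ⟨Finset.mem_univ _, hacc⟩⟩
    constructor
    · intro hdec
      exact Or.inr ⟨mem_NoHit.2 hall, hdec⟩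
    · rintro (⟨i, hi⟩ | ⟨_, hdec⟩)
      · obtain ⟨_, h2⟩ := mem_Hit.1 hi
        exact absurd (Set.mem_iUnion.2 ⟨v, h2⟩) (hall i)
      · exact hdec

end ffsec

lemma A_sub_Acc (P : 𝒰 → ℝ) (v : 𝒰) : A P v ⊆ Acc P :=
  Set.subset_iUnion (fun w => A P w) v

lemma geom_id (n NN : ℕ) (c : ℝ) :
    ∑ m ∈ Finset.range NN, (1 - 1/(n:ℝ))^m * (c/n) + (1 - 1/(n:ℝ))^NN * c = c := by
  have hgeo := geom_sum_mul (1 - 1/(n:ℝ)) NN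
  rw [← Finset.sum_mul]
  linear_combination (-c) * hgeo

section marg
variable {P : 𝒰 → ℝ} (hP : ∀ u, 0 ≤ P u) (hP1 : ∑ u, P u = 1)

include hP hP1 in
lemma μ01_Acc_compl : μ01 (Acc P)ᶜ = ENNReal.ofReal (1 - 1 / n 𝒰) := by
  rw [prob_compl_eq_one_sub (measurableSet_Acc P), μ01_Acc_apply hP hP1,
    ← ENNReal.ofReal_one, ← ENNReal.ofReal_sub _ (by positivity)]

lemma disj_Hits (P : 𝒰 → ℝ) (v : 𝒰) :
    Pairwise (Function.onFun Disjoint fun i => Hit P i v ×ˢ (univ : Set ℝ)) := by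
  intro i i' hne
  rw [Function.onFun, Set.disjoint_left]
  rintro ⟨ω, s⟩ h1 h2
  rw [Set.mem_prod] at h1 h2
  obtain ⟨ha1, hb1⟩ := mem_Hit.1 h1.1
  obtain ⟨ha2, hb2⟩ := mem_Hit.1 h2.1
  rcases hne.lt_or_gt with hlt | hlt
  · exact ha2 i hlt (A_sub_Acc P v hb1)
  · exact ha1 i' hlt (A_sub_Acc P v hb2)

lemma disj_NoHit (P : 𝒰 → ℝ) (v : 𝒰) (S : Set ℝ) :
    Disjoint (⋃ i, Hit P i v ×ˢ (univ : Set ℝ)) ((NoHit P) ×ˢ S) := by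
  rw [Set.disjoint_left]
  rintro ⟨ω, s⟩ h1 h2
  obtain ⟨U, ⟨i, rfl⟩, hU⟩ := h1
  rw [Set.mem_prod] at hU h2
  exact (mem_NoHit.1 h2.1 i) (A_sub_Acc P v (mem_Hit.1 hU.1).2)

include hP hP1 in
theorem nu_preim (v : 𝒰) : nu 𝒰 (ff P ⁻¹' {v}) = ENNReal.ofReal (P v) := by
  have hn := n_pos 𝒰
  have h01 : (0:ℝ) ≤ 1 - 1 / n 𝒰 := by
    have : 1 / (n 𝒰 : ℝ) ≤ 1 := by
      rw [div_le_one (by positivity)]; exact_mod_cast hn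
    linarith
  rw [preim_ff hP hP1 v,
    measure_union (disj_NoHit P v _)
      ((measurableSet_NoHit P).prod (measurableSet_dec_fiber (F P) (F_mono hP) v)),
    measure_iUnion (disj_Hits P v)
      (fun i => (measurableSet_Hit P i v).prod MeasurableSet.univ),
    tsum_fintype]
  have hterm : ∀ i : Fin (N 𝒰), nu 𝒰 (Hit P i v ×ˢ (univ : Set ℝ)) =
      ENNReal.ofReal ((1 - 1 / n 𝒰)^(i:ℕ) * (P v / n 𝒰)) := by
    intro i
    rw [nu, Measure.prod_prod, measure_univ, mul_one]
    rw [show Hit P i v = Set.univ.pi fun j =>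
        if j < i then (Acc P)ᶜ else if j = i then A P v else univ from rfl,
      piM_cyl i _ _ (measurableSet_Acc P).compl (measurableSet_A P v),
      μ01_Acc_compl hP hP1, μ01_A_apply hP hP1,
      ← ENNReal.ofReal_pow h01, ← ENNReal.ofReal_mul (pow_nonneg h01 _)]
  have hterm2 : nu 𝒰 ((NoHit P) ×ˢ {s : ℝ | dec 𝒰 (F P) s = v}) =
      ENNReal.ofReal ((1 - 1 / n 𝒰)^(N 𝒰) * P v) := by
    rw [nu, Measure.prod_prod,
      show NoHit P = Set.univ.pi fun _ : Fin (N 𝒰) => (Acc P)ᶜ from rfl,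
      piM_const _ (measurableSet_Acc P).compl,
      μ01_Acc_compl hP hP1, μ01_g_fiber hP hP1 v,
      ← ENNReal.ofReal_pow h01, ← ENNReal.ofReal_mul (pow_nonneg h01 _)]
  simp_rw [hterm, hterm2]
  rw [Fin.sum_univ_eq_sum_range (fun m => ENNReal.ofReal ((1 - 1 / n 𝒰)^m * (P v / n 𝒰))),
    ← ENNReal.ofReal_sum_of_nonneg
      (fun m _ => mul_nonneg (pow_nonneg h01 m) (div_nonneg (hP v) (by positivity))),
    ← ENNReal.ofReal_add (Finset.sum_nonneg fun m _ =>
      mul_nonneg (pow_nonneg h01 m) (div_nonneg (hP v) (by positivity)))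
      (mul_nonneg (pow_nonneg h01 _) (hP v)),
    geom_id (n 𝒰) (N 𝒰) (P v)]

end marg

-- disagreement events
lemma mem_pi_if {a b : Set ℝ} {i : Fin (N 𝒰)} {ω : Fin (N 𝒰) → ℝ} :
    ω ∈ (Set.univ.pi fun j => if j < i then a else if j = i then b else univ) ↔
      (∀ j, j < i → ω j ∈ a) ∧ ω i ∈ b := by
  rw [Set.mem_univ_pi]
  constructor
  · intro h
    refine ⟨fun j hj => by have := h j; rwa [if_pos hj] at this, ?_⟩
    have := h i
    rwa [if_neg (lt_irrefl i), if_pos rfl] at this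
  · rintro ⟨h1, h2⟩ j
    split_ifs with hj hji
    · exact h1 j hj
    · exact hji ▸ h2
    · trivial

def Bset (P Q : 𝒰 → ℝ) (i : Fin (N 𝒰)) : Set (Fin (N 𝒰) → ℝ) :=
  Set.univ.pi fun j => if j < i then (Acc P ∪ Acc Q)ᶜ
    else if j = i then (Acc P ∪ Acc Q) \ (Acc P ∩ Acc Q) else univ

def NoHit2 (P Q : 𝒰 → ℝ) : Set (Fin (N 𝒰) → ℝ) :=
  Set.univ.pi fun _ => (Acc P ∪ Acc Q)ᶜ

section disag
variable {P Q : 𝒰 → ℝ} (hP : ∀ u, 0 ≤ P u) (hP1 : ∑ u, P u = 1)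
  (hQ : ∀ u, 0 ≤ Q u) (hQ1 : ∑ u, Q u = 1)

lemma disagree_subset :
    {z : (Fin (N 𝒰) → ℝ) × ℝ | ff P z ≠ ff Q z} ⊆
      (⋃ i, Bset P Q i ×ˢ (univ : Set ℝ)) ∪
        (NoHit2 P Q) ×ˢ {s : ℝ | dec 𝒰 (F P) s ≠ dec 𝒰 (F Q) s} := by
  classical
  rintro ⟨ω, s⟩ hne
  simp only [Set.mem_setOf_eq] at hne
  by_cases h : (Finset.univ.filter fun i : Fin (N 𝒰) => ω i ∈ Acc P ∪ Acc Q).Nonempty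
  · left
    set i₁ := (Finset.univ.filter fun i : Fin (N 𝒰) => ω i ∈ Acc P ∪ Acc Q).min' h with hi₁
    have hi₁mem : ω i₁ ∈ Acc P ∪ Acc Q := by
      have := Finset.min'_mem _ h
      rw [Finset.mem_filter] at this
      exact this.2
    have hlt : ∀ j, j < i₁ → ω j ∉ Acc P ∪ Acc Q := by
      intro j hj hacc
      have : i₁ ≤ j := Finset.min'_le _ j
        (by rw [Finset.mem_filter]; exact ⟨Finset.mem_univ _, hacc⟩)
      exact absurd this (not_le.2 hj)
    have hnotint : ω i₁ ∉ Acc P ∩ Acc Q := by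
      intro hint
      apply hne
      have heqP : ff P (ω, s) = dec 𝒰 (cu 𝒰) (ω i₁) := by
        have hPne : (Finset.univ.filter fun i : Fin (N 𝒰) => ω i ∈ Acc P).Nonempty :=
          ⟨i₁, by rw [Finset.mem_filter]; exact ⟨Finset.mem_univ _, hint.1⟩⟩
        have hidx : (Finset.univ.filter fun i : Fin (N 𝒰) => ω i ∈ Acc P).min' hPne = i₁ := by
          apply le_antisymm
          · exact Finset.min'_le _ i₁
              (by rw [Finset.mem_filter]; exact ⟨Finset.mem_univ _, hint.1⟩)
          · have hmem := Finset.min'_mem _ hPne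
            rw [Finset.mem_filter] at hmem
            exact Finset.min'_le
              (Finset.univ.filter fun i : Fin (N 𝒰) => ω i ∈ Acc P ∪ Acc Q) _
              (by rw [Finset.mem_filter]; exact ⟨Finset.mem_univ _, Or.inl hmem.2⟩)
        unfold ff
        dsimp only
        rw [dif_pos hPne, hidx]
      have heqQ : ff Q (ω, s) = dec 𝒰 (cu 𝒰) (ω i₁) := by
        have hQne : (Finset.univ.filter fun i : Fin (N 𝒰) => ω i ∈ Acc Q).Nonempty :=
          ⟨i₁, by rw [Finset.mem_filter]; exact ⟨Finset.mem_univ _, hint.2⟩⟩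
        have hidx : (Finset.univ.filter fun i : Fin (N 𝒰) => ω i ∈ Acc Q).min' hQne = i₁ := by
          apply le_antisymm
          · exact Finset.min'_le _ i₁
              (by rw [Finset.mem_filter]; exact ⟨Finset.mem_univ _, hint.2⟩)
          · have hmem := Finset.min'_mem _ hQne
            rw [Finset.mem_filter] at hmem
            exact Finset.min'_le
              (Finset.univ.filter fun i : Fin (N 𝒰) => ω i ∈ Acc P ∪ Acc Q) _
              (by rw [Finset.mem_filter]; exact ⟨Finset.mem_univ _, Or.inr hmem.2⟩)
        unfold ff
        dsimp only
        rw [dif_pos hQne, hidx]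
      rw [heqP, heqQ]
    exact Set.mem_iUnion.2 ⟨i₁, Set.mem_prod.2
      ⟨mem_pi_if.2 ⟨hlt, ⟨hi₁mem, hnotint⟩⟩, Set.mem_univ _⟩⟩
  · right
    have hall : ∀ j, ω j ∉ Acc P ∪ Acc Q := by
      intro j hacc
      exact h ⟨j, by rw [Finset.mem_filter]; exact ⟨Finset.mem_univ _, hacc⟩⟩
    have hPem : ¬(Finset.univ.filter fun i : Fin (N 𝒰) => ω i ∈ Acc P).Nonempty := by
      rintro ⟨i, hi⟩
      rw [Finset.mem_filter] at hi
      exact hall i (Or.inl hi.2)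
    have hQem : ¬(Finset.univ.filter fun i : Fin (N 𝒰) => ω i ∈ Acc Q).Nonempty := by
      rintro ⟨i, hi⟩
      rw [Finset.mem_filter] at hi
      exact hall i (Or.inr hi.2)
    have heqP : ff P (ω, s) = dec 𝒰 (F P) s := by
      unfold ff; dsimp only; rw [dif_neg hPem]
    have heqQ : ff Q (ω, s) = dec 𝒰 (F Q) s := by
      unfold ff; dsimp only; rw [dif_neg hQem]
    refine Set.mem_prod.2 ⟨Set.mem_univ_pi.2 fun j => hall j, ?_⟩
    simp only [Set.mem_setOf_eq]
    rw [← heqP, ← heqQ]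
    exact hne

end disag

-- real arithmetic for the final bound
lemma two_mul_le_two_pow (m : ℕ) (hm : 1 ≤ m) : (2 * m : ℝ) ≤ 2 ^ m := by
  induction m with
  | zero => norm_num
  | succ k ih =>
    rcases Nat.eq_zero_or_pos k with rfl | hk
    · norm_num
    · have h2 : (2:ℝ) ≤ 2 ^ k := by
        calc (2:ℝ) = 2 * 1 := by ring
        _ ≤ 2 * k := by
            have : (1:ℝ) ≤ k := by exact_mod_cast hk
            linarith
        _ ≤ 2 ^ k := ih hk
      have := ih hk
      push_cast
      rw [pow_succ]
      push_cast at this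
      linarith

lemma pow_sq_le (m : ℕ) (hm : 1 ≤ m) :
    (1 - 1 / (m:ℝ)) ^ (m ^ 2) * (2 * m) ≤ 1 := by
  have hm0 : (0:ℝ) < m := by exact_mod_cast hm
  have h01 : (0:ℝ) ≤ 1 - 1 / m := by
    have : 1 / (m:ℝ) ≤ 1 := by rw [div_le_one hm0]; exact_mod_cast hm
    linarith
  have hexp : (1 - 1 / (m:ℝ)) ≤ Real.exp (-(1 / m)) := by
    have := Real.add_one_le_exp (-(1 / (m:ℝ)))
    linarith
  have hpow : (1 - 1 / (m:ℝ)) ^ (m ^ 2) ≤ Real.exp (-(1 / m)) ^ (m ^ 2) :=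
    pow_le_pow_left₀ h01 hexp _
  have hexp2 : Real.exp (-(1 / (m:ℝ))) ^ (m ^ 2) = Real.exp (-(m:ℝ)) := by
    rw [← Real.exp_nat_mul]
    congr 1
    field_simp
    simp
  have hkey : Real.exp (-(m:ℝ)) * (2 * m) ≤ 1 := by
    rw [Real.exp_neg]
    rw [inv_mul_le_iff₀ (Real.exp_pos _)]
    rw [mul_one]
    calc (2 * m : ℝ) ≤ 2 ^ m := two_mul_le_two_pow m hm
      _ ≤ Real.exp 1 ^ m := by
          apply pow_le_pow_left₀ (by norm_num)
          have := Real.add_one_le_exp 1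
          linarith
      _ = Real.exp m := by rw [← Real.exp_nat_mul]; ring_nf
  calc (1 - 1 / (m:ℝ)) ^ (m ^ 2) * (2 * m)
      ≤ Real.exp (-(m:ℝ)) * (2 * m) := by
        apply mul_le_mul_of_nonneg_right _ (by positivity)
        rw [← hexp2]; exact hpow
    _ ≤ 1 := hkey

lemma final_real (m : ℕ) (hm : 1 ≤ m) (δ : ℝ) (hδ : 0 ≤ δ) (hδm : 1 + δ / 2 ≤ m) :
    ∑ j ∈ Finset.range (m ^ 2), (1 - (1 + δ / 2) / m) ^ j * (δ / m) +
      (1 - 1 / (m:ℝ)) ^ (m ^ 2) * (2 * m * δ) ≤ 2 * δ := by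
  have hm0 : (0:ℝ) < m := by exact_mod_cast hm
  have hy0 : (0:ℝ) ≤ 1 - (1 + δ / 2) / m := by
    have : (1 + δ / 2) / (m:ℝ) ≤ 1 := by rw [div_le_one hm0]; linarith
    linarith
  have hx0 : (0:ℝ) ≤ 1 - 1 / m := by
    have : 1 / (m:ℝ) ≤ 1 := by rw [div_le_one hm0]; exact_mod_cast hm
    linarith
  have hyx : 1 - (1 + δ / 2) / (m:ℝ) ≤ 1 - 1 / m := by
    have : 1 / (m:ℝ) ≤ (1 + δ / 2) / m := by
      apply div_le_div_of_nonneg_right (by linarith) hm0.le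
    linarith
  -- sum of x powers is at most m
  have hgeo := geom_sum_mul (1 - 1 / (m:ℝ)) (m ^ 2)
  have hxN : (0:ℝ) ≤ (1 - 1 / (m:ℝ)) ^ (m ^ 2) := pow_nonneg hx0 _
  have hSx : ∑ j ∈ Finset.range (m ^ 2), (1 - 1 / (m:ℝ)) ^ j ≤ m := by
    have h1 : (∑ j ∈ Finset.range (m ^ 2), (1 - 1 / (m:ℝ)) ^ j) * (1 / m) =
        1 - (1 - 1 / (m:ℝ)) ^ (m ^ 2) := by linear_combination -hgeo
    have h2 : (∑ j ∈ Finset.range (m ^ 2), (1 - 1 / (m:ℝ)) ^ j) * (1 / m) ≤ 1 := by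
      rw [h1]; linarith
    calc ∑ j ∈ Finset.range (m ^ 2), (1 - 1 / (m:ℝ)) ^ j
        = ((∑ j ∈ Finset.range (m ^ 2), (1 - 1 / (m:ℝ)) ^ j) * (1 / m)) * m := by
          field_simp
      _ ≤ 1 * m := by apply mul_le_mul_of_nonneg_right h2 hm0.le
      _ = m := one_mul _
  have hterm1 : ∑ j ∈ Finset.range (m ^ 2), (1 - (1 + δ / 2) / (m:ℝ)) ^ j * (δ / m) ≤ δ := by
    rw [← Finset.sum_mul]
    have hS : ∑ j ∈ Finset.range (m ^ 2), (1 - (1 + δ / 2) / (m:ℝ)) ^ j ≤ m := by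
      refine (Finset.sum_le_sum fun j _ => ?_).trans hSx
      exact pow_le_pow_left₀ hy0 hyx j
    calc (∑ j ∈ Finset.range (m ^ 2), (1 - (1 + δ / 2) / (m:ℝ)) ^ j) * (δ / m)
        ≤ (m:ℝ) * (δ / m) := by
          apply mul_le_mul_of_nonneg_right hS (by positivity)
      _ = δ := by field_simp
  have hterm2 : (1 - 1 / (m:ℝ)) ^ (m ^ 2) * (2 * m * δ) ≤ δ := by
    calc (1 - 1 / (m:ℝ)) ^ (m ^ 2) * (2 * m * δ)
        = ((1 - 1 / (m:ℝ)) ^ (m ^ 2) * (2 * m)) * δ := by ring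
      _ ≤ 1 * δ := mul_le_mul_of_nonneg_right (pow_sq_le m hm) hδ
      _ = δ := one_mul _
  linarith

section disag2
variable {P Q : 𝒰 → ℝ} (hP : ∀ u, 0 ≤ P u) (hP1 : ∑ u, P u = 1)
  (hQ : ∀ u, 0 ≤ Q u) (hQ1 : ∑ u, Q u = 1)

include hP hP1 hQ hQ1 in
lemma sum_max_eq : ∑ v, max (P v) (Q v) = 1 + (∑ v, |P v - Q v|) / 2 := by
  have : ∀ v, max (P v) (Q v) = (P v + Q v + |P v - Q v|) / 2 := by
    intro v
    rcases le_total (P v) (Q v) with h | h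
    · rw [max_eq_right h, abs_of_nonpos (by linarith)]; ring
    · rw [max_eq_left h, abs_of_nonneg (by linarith)]; ring
  simp_rw [this]
  rw [← Finset.sum_div, Finset.sum_add_distrib, Finset.sum_add_distrib, hP1, hQ1]
  ring

include hP hP1 hQ hQ1 in
theorem nu_disagree :
    nu 𝒰 {z : (Fin (N 𝒰) → ℝ) × ℝ | ff P z ≠ ff Q z} ≤
      ENNReal.ofReal (2 * ∑ v, |P v - Q v|) := by
  classical
  have hn := n_pos 𝒰
  set δ := ∑ v, |P v - Q v| with hδdef
  have hδ0 : 0 ≤ δ := Finset.sum_nonneg fun v _ => abs_nonneg _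
  have hδm : 1 + δ / 2 ≤ (n 𝒰 : ℝ) := by
    have hsum : ∑ v, max (P v) (Q v) ≤ (n 𝒰 : ℝ) := by
      calc ∑ v, max (P v) (Q v) ≤ ∑ _v : 𝒰, (1:ℝ) :=
            Finset.sum_le_sum fun v _ =>
              max_le (P_le_one hP hP1 v) (P_le_one hQ hQ1 v)
        _ = (n 𝒰 : ℝ) := by
            rw [Finset.sum_const, Finset.card_univ, nsmul_eq_mul, mul_one]
    rw [sum_max_eq hP hP1 hQ hQ1] at hsum
    linarith
  have hn0 : (0:ℝ) < n 𝒰 := by exact_mod_cast hn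
  have hU : MeasurableSet (Acc P ∪ Acc Q) :=
    (measurableSet_Acc P).union (measurableSet_Acc Q)
  have hy0 : (0:ℝ) ≤ 1 - (1 + δ / 2) / n 𝒰 := by
    have : (1 + δ / 2) / (n 𝒰 : ℝ) ≤ 1 := by rw [div_le_one hn0]; exact hδm
    linarith
  have hx0 : (0:ℝ) ≤ 1 - 1 / n 𝒰 := by
    have : 1 / (n 𝒰 : ℝ) ≤ 1 := by
      rw [div_le_one hn0]; exact_mod_cast hn
    linarith
  have hμUc : μ01 (Acc P ∪ Acc Q)ᶜ = ENNReal.ofReal (1 - (1 + δ / 2) / n 𝒰) := by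
    rw [prob_compl_eq_one_sub hU, μ01_Acc_union hP hP1 hQ hQ1,
      sum_max_eq hP hP1 hQ hQ1, ← ENNReal.ofReal_one,
      ← ENNReal.ofReal_sub _ (div_nonneg (by linarith) hn0.le)]
  refine (measure_mono (disagree_subset (P := P) (Q := Q))).trans ?_
  refine (measure_union_le _ _).trans ?_
  have h1 : nu 𝒰 (⋃ i, Bset P Q i ×ˢ (univ : Set ℝ)) ≤
      ENNReal.ofReal (∑ j ∈ Finset.range (N 𝒰),
        (1 - (1 + δ / 2) / n 𝒰) ^ j * (δ / n 𝒰)) := by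
    refine (measure_iUnion_le _).trans ?_
    rw [tsum_fintype]
    have hBi : ∀ i : Fin (N 𝒰), nu 𝒰 (Bset P Q i ×ˢ (univ : Set ℝ)) ≤
        ENNReal.ofReal ((1 - (1 + δ / 2) / n 𝒰) ^ (i : ℕ) * (δ / n 𝒰)) := by
      intro i
      rw [nu, Measure.prod_prod, measure_univ, mul_one,
        show Bset P Q i = Set.univ.pi fun j => if j < i then (Acc P ∪ Acc Q)ᶜ
          else if j = i then (Acc P ∪ Acc Q) \ (Acc P ∩ Acc Q) else univ from rfl,
        piM_cyl i _ _ hU.compl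
          (hU.diff ((measurableSet_Acc P).inter (measurableSet_Acc Q))),
        hμUc, ← ENNReal.ofReal_pow hy0]
      calc ENNReal.ofReal ((1 - (1 + δ / 2) / n 𝒰) ^ (i : ℕ)) *
            μ01 ((Acc P ∪ Acc Q) \ (Acc P ∩ Acc Q))
          ≤ ENNReal.ofReal ((1 - (1 + δ / 2) / n 𝒰) ^ (i : ℕ)) *
            ENNReal.ofReal (δ / n 𝒰) :=
            mul_le_mul_right (μ01_oneAcc_le hP hP1 hQ hQ1) _
        _ = ENNReal.ofReal ((1 - (1 + δ / 2) / n 𝒰) ^ (i : ℕ) * (δ / n 𝒰)) :=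
            (ENNReal.ofReal_mul (pow_nonneg hy0 _)).symm
    refine (Finset.sum_le_sum fun i _ => hBi i).trans_eq ?_
    rw [Fin.sum_univ_eq_sum_range
      (fun j => ENNReal.ofReal ((1 - (1 + δ / 2) / n 𝒰) ^ j * (δ / n 𝒰))) (N 𝒰),
      ← ENNReal.ofReal_sum_of_nonneg (fun j _ =>
        mul_nonneg (pow_nonneg hy0 j) (div_nonneg hδ0 hn0.le))]
  have h2 : nu 𝒰 ((NoHit2 P Q) ×ˢ {s : ℝ | dec 𝒰 (F P) s ≠ dec 𝒰 (F Q) s}) ≤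
      ENNReal.ofReal ((1 - 1 / (n 𝒰 : ℝ)) ^ (N 𝒰) * (2 * n 𝒰 * δ)) := by
    rw [nu, Measure.prod_prod,
      show NoHit2 P Q = Set.univ.pi fun _ : Fin (N 𝒰) => (Acc P ∪ Acc Q)ᶜ from rfl,
      piM_const _ hU.compl, hμUc]
    calc ENNReal.ofReal (1 - (1 + δ / 2) / n 𝒰) ^ (N 𝒰) *
          μ01 {s : ℝ | dec 𝒰 (F P) s ≠ dec 𝒰 (F Q) s}
        ≤ ENNReal.ofReal (1 - 1 / (n 𝒰 : ℝ)) ^ (N 𝒰) *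
          ENNReal.ofReal (2 * n 𝒰 * δ) := by
          refine mul_le_mul' ?_ (μ01_g_disagree_le hP hP1 hQ hQ1)
          have hreal : 1 - (1 + δ / 2) / (n 𝒰 : ℝ) ≤ 1 - 1 / n 𝒰 := by
            have : 1 / (n 𝒰 : ℝ) ≤ (1 + δ / 2) / n 𝒰 :=
              div_le_div_of_nonneg_right (by linarith) hn0.le
            linarith
          exact pow_le_pow_left' (ENNReal.ofReal_le_ofReal hreal) (N 𝒰)
      _ = ENNReal.ofReal ((1 - 1 / (n 𝒰 : ℝ)) ^ (N 𝒰) * (2 * n 𝒰 * δ)) := by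
          rw [← ENNReal.ofReal_pow hx0,
            ← ENNReal.ofReal_mul (pow_nonneg hx0 _)]
  calc nu 𝒰 (⋃ i, Bset P Q i ×ˢ (univ : Set ℝ)) +
        nu 𝒰 ((NoHit2 P Q) ×ˢ {s : ℝ | dec 𝒰 (F P) s ≠ dec 𝒰 (F Q) s})
      ≤ ENNReal.ofReal (∑ j ∈ Finset.range (N 𝒰),
          (1 - (1 + δ / 2) / n 𝒰) ^ j * (δ / n 𝒰)) +
        ENNReal.ofReal ((1 - 1 / (n 𝒰 : ℝ)) ^ (N 𝒰) * (2 * n 𝒰 * δ)) :=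
        add_le_add h1 h2
    _ = ENNReal.ofReal ((∑ j ∈ Finset.range (N 𝒰),
          (1 - (1 + δ / 2) / n 𝒰) ^ j * (δ / n 𝒰)) +
          (1 - 1 / (n 𝒰 : ℝ)) ^ (N 𝒰) * (2 * n 𝒰 * δ)) :=
        (ENNReal.ofReal_add (Finset.sum_nonneg fun j _ =>
          mul_nonneg (pow_nonneg hy0 j) (div_nonneg hδ0 hn0.le))
          (mul_nonneg (pow_nonneg hx0 _) (by positivity))).symm
    _ ≤ ENNReal.ofReal (2 * δ) :=
        ENNReal.ofReal_le_ofReal (final_real (n 𝒰) hn δ hδ0 hδm)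

end disag2

end CS


open MeasureTheory

/-- Classical correlated sampling (coupling form): there is a universal constant `K > 0`
such that for every finite nonempty set `𝒰` there is a single probability space `(S, ν)`
and, for each distribution `P` on `𝒰`, a random variable `f P : S → 𝒰` distributed
exactly according to `P`, such that for any two distributions `P, Q`,
`ν(f P ≠ f Q) ≤ K · ‖P − Q‖`, where `‖·‖` is total variation distance. -/
theorem stmt16 :
    ∃ K : ℝ, 0 < K ∧
      ∀ (𝒰 : Type) [Fintype 𝒰] [Nonempty 𝒰],
        ∃ (S : Type) (_ : MeasurableSpace S) (ν : Measure S),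
          IsProbabilityMeasure ν ∧
          ∃ f : (𝒰 → ℝ) → S → 𝒰,
            (∀ P : 𝒰 → ℝ, (∀ u, 0 ≤ P u) → (∑ u, P u) = 1 →
              ∀ u, ν (f P ⁻¹' {u}) = ENNReal.ofReal (P u)) ∧
            (∀ P Q : 𝒰 → ℝ, (∀ u, 0 ≤ P u) → (∑ u, P u) = 1 →
              (∀ u, 0 ≤ Q u) → (∑ u, Q u) = 1 →
              ν {ω : S | f P ω ≠ f Q ω} ≤
                ENNReal.ofReal (K * ((1 / 2) * ∑ u, |P u - Q u|))) := by
  refine ⟨4, by norm_num, ?_⟩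
  intro 𝒰 _ _
  refine ⟨(Fin (CS.N 𝒰) → ℝ) × ℝ, inferInstance, CS.nu 𝒰, inferInstance, CS.ff, ?_, ?_⟩
  · intro P hP hP1 u
    exact CS.nu_preim hP hP1 u
  · intro P Q hP hP1 hQ hQ1
    refine (CS.nu_disagree hP hP1 hQ hQ1).trans_eq ?_
    congr 1
    ring
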